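/- Define q₀ = −35/16, q₁ = 7/4, q₂ = −7/8, q₃ = 1/4, q₄ = −1/32, and γ(τ) = (1/3π)[ q₀ τ³ ln|τ| + Σ_{p=1}^{4} q_p ( (τ+p)³ ln|τ+p| + (τ−p)³ ln|τ−p| ) ] (convention 0·ln 0 = 0). Then γ(τ) · τ⁵ → −3/(2π) as |τ| → ∞, i.e. γ(τ) ∼ −3/(2πτ⁵). -/

import Mathlib

open Real Filter

/-- The rescaled correction function: `(1+u)³log(1+u) + (1-u)³log(1-u)` minus the first
three terms of its Taylor expansion at `0`. -/
noncomputable def Fg (u : ℝ) : ℝ :=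
  (1+u)^3 * Real.log (1+u) + (1-u)^3 * Real.log (1-u) - 5*u^2 - u^4/2 - u^6/30

lemma log_approx (z : ℝ) (hz : |z| ≤ 1/2) :
    |Real.log (1 - z) + (z + z^2/2 + z^3/3 + z^4/4 + z^5/5 + z^6/6 + z^7/7 + z^8/8)| ≤ 2 * |z|^9 := by
  have h1 : |z| < 1 := lt_of_le_of_lt hz (by norm_num)
  have h := Real.abs_log_sub_add_sum_range_le h1 8
  have hsum : (∑ i ∈ Finset.range 8, z ^ (i+1) / (i+1)) =
      z + z^2/2 + z^3/3 + z^4/4 + z^5/5 + z^6/6 + z^7/7 + z^8/8 := by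
    simp [Finset.sum_range_succ]
    norm_num
  rw [hsum] at h
  have h2 : |z|^9 / (1 - |z|) ≤ 2 * |z|^9 := by
    rw [div_le_iff₀ (by linarith)]
    nlinarith [pow_nonneg (abs_nonneg z) 9]
  calc |Real.log (1-z) + (z + z^2/2 + z^3/3 + z^4/4 + z^5/5 + z^6/6 + z^7/7 + z^8/8)|
      = |(z + z^2/2 + z^3/3 + z^4/4 + z^5/5 + z^6/6 + z^7/7 + z^8/8) + Real.log (1-z)| := by
        rw [add_comm]
    _ ≤ |z|^9 / (1 - |z|) := h
    _ ≤ 2 * |z|^9 := h2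

lemma key : Tendsto (fun u : ℝ => Fg u / u^8) (nhdsWithin 0 {x | x ≠ 0}) (nhds (1/140)) := by
  have hE : Tendsto (fun u : ℝ => (Fg u - (u^8/140 - 13/28*u^10)) / u^8)
      (nhdsWithin 0 {x | x ≠ 0}) (nhds 0) := by
    apply squeeze_zero_norm' (a := fun u : ℝ => 14 * |u|)
    · have hev : ∀ᶠ u : ℝ in nhdsWithin 0 {x | x ≠ 0}, |u| ≤ 1/2 ∧ u ≠ 0 := by
        filter_upwards [nhdsWithin_le_nhds (Metric.closedBall_mem_nhds (0:ℝ) (by norm_num : (0:ℝ) < 1/2)),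
          self_mem_nhdsWithin] with u h1 h2
        exact ⟨by simpa [Real.dist_eq] using h1, h2⟩
      filter_upwards [hev] with u hu'
      obtain ⟨hu, hu0⟩ := hu'
      have hup : |(-u)| ≤ 1/2 := by rwa [abs_neg]
      have hA := log_approx (-u) hup
      have hB := log_approx u hu
      have h1u : (1 : ℝ) - -u = 1 + u := by ring
      rw [h1u] at hA
      have hid : Fg u - (u^8/140 - 13/28*u^10)
          = (1+u)^3 * (Real.log (1+u) + ((-u) + (-u)^2/2 + (-u)^3/3 + (-u)^4/4 + (-u)^5/5 + (-u)^6/6 + (-u)^7/7 + (-u)^8/8))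
          + (1-u)^3 * (Real.log (1-u) + (u + u^2/2 + u^3/3 + u^4/4 + u^5/5 + u^6/6 + u^7/7 + u^8/8)) := by
        unfold Fg; ring
      obtain ⟨hl, hr⟩ := abs_le.mp hu
      have hc1 : |(1+u)^3| ≤ 27/8 := by
        rw [abs_pow]
        calc |1+u|^3 ≤ (3/2:ℝ)^3 := by
              apply pow_le_pow_left₀ (abs_nonneg _)
              rw [abs_le]; constructor <;> linarith
          _ = 27/8 := by norm_num
      have hc2 : |(1-u)^3| ≤ 27/8 := by
        rw [abs_pow]
        calc |1-u|^3 ≤ (3/2:ℝ)^3 := by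
              apply pow_le_pow_left₀ (abs_nonneg _)
              rw [abs_le]; constructor <;> linarith
          _ = 27/8 := by norm_num
      have hbound : |Fg u - (u^8/140 - 13/28*u^10)| ≤ 14 * |u|^9 := by
        rw [hid]
        have e1 := abs_add_le ((1+u)^3 * (Real.log (1+u) + ((-u) + (-u)^2/2 + (-u)^3/3 + (-u)^4/4 + (-u)^5/5 + (-u)^6/6 + (-u)^7/7 + (-u)^8/8)))
          ((1-u)^3 * (Real.log (1-u) + (u + u^2/2 + u^3/3 + u^4/4 + u^5/5 + u^6/6 + u^7/7 + u^8/8)))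
        rw [abs_mul, abs_mul] at e1
        have t1 : |(1+u)^3| * |Real.log (1+u) + ((-u) + (-u)^2/2 + (-u)^3/3 + (-u)^4/4 + (-u)^5/5 + (-u)^6/6 + (-u)^7/7 + (-u)^8/8)|
            ≤ (27/8) * (2*|(-u)|^9) :=
          mul_le_mul hc1 hA (abs_nonneg _) (by norm_num)
        have t2 : |(1-u)^3| * |Real.log (1-u) + (u + u^2/2 + u^3/3 + u^4/4 + u^5/5 + u^6/6 + u^7/7 + u^8/8)|
            ≤ (27/8) * (2*|u|^9) :=
          mul_le_mul hc2 hB (abs_nonneg _) (by norm_num)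
        rw [abs_neg] at t1
        calc _ ≤ _ := e1
          _ ≤ (27/8) * (2*|u|^9) + (27/8) * (2*|u|^9) := add_le_add t1 t2
          _ ≤ 14 * |u|^9 := by nlinarith [pow_nonneg (abs_nonneg u) 9]
      have hnorm : ‖(Fg u - (u^8/140 - 13/28*u^10)) / u^8‖
          = |Fg u - (u^8/140 - 13/28*u^10)| / |u|^8 := by
        rw [Real.norm_eq_abs, abs_div, abs_pow]
      rw [hnorm, div_le_iff₀ (by positivity)]
      calc |Fg u - (u^8/140 - 13/28*u^10)| ≤ 14 * |u|^9 := hbound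
        _ = 14 * |u| * |u|^8 := by ring
    · have h14 : Tendsto (fun u : ℝ => 14 * |u|) (nhds 0) (nhds 0) := by
        have := (continuous_abs.tendsto (0:ℝ)).const_mul (14:ℝ)
        simpa using this
      exact h14.mono_left nhdsWithin_le_nhds
  have hG : Tendsto (fun u : ℝ => 1/140 - 13/28 * u^2) (nhdsWithin 0 {x | x ≠ 0}) (nhds (1/140)) := by
    have hc : Tendsto (fun u : ℝ => 1/140 - 13/28 * u^2) (nhds 0) (nhds (1/140 - 13/28 * 0^2)) := by
      apply Continuous.tendsto; continuity
    simpa using hc.mono_left nhdsWithin_le_nhds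
  have hsum := hG.add hE
  rw [add_zero] at hsum
  have heq : (fun u : ℝ => 1/140 - 13/28 * u^2 + (Fg u - (u^8/140 - 13/28*u^10)) / u^8)
      =ᶠ[nhdsWithin 0 {x | x ≠ 0}] (fun u : ℝ => Fg u / u^8) := by
    filter_upwards [self_mem_nhdsWithin] with u hu
    have hu0 : u ≠ 0 := hu
    field_simp
    ring
  exact Filter.Tendsto.congr' heq hsum

lemma tau_ne (p τ : ℝ) (hp : 0 < p) (h : p < |τ|) : τ ≠ 0 := by
  intro h0; rw [h0, abs_zero] at h; linarith

lemma frac_lt (p τ : ℝ) (hp : 0 < p) (h : p < |τ|) : |p/τ| < 1 := by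
  rw [abs_div, div_lt_one (lt_trans hp h), abs_of_pos hp]; exact h

lemma split (p τ : ℝ) (hp : 0 < p) (h : p < |τ|) :
    (τ+p)^3 * Real.log |τ+p| + (τ-p)^3 * Real.log |τ-p|
      = ((τ+p)^3 + (τ-p)^3) * Real.log |τ|
        + ((τ+p)^3 * Real.log (1+p/τ) + (τ-p)^3 * Real.log (1-p/τ)) := by
  have hτ : τ ≠ 0 := tau_ne p τ hp h
  obtain ⟨hl, hr⟩ := abs_lt.mp (frac_lt p τ hp h)
  have h1 : (0:ℝ) < 1 + p/τ := by linarith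
  have h2 : (0:ℝ) < 1 - p/τ := by linarith
  have e1 : Real.log |τ+p| = Real.log |τ| + Real.log (1+p/τ) := by
    rw [Real.log_abs, Real.log_abs, ← Real.log_mul hτ (ne_of_gt h1)]
    congr 1; field_simp
  have e2 : Real.log |τ-p| = Real.log |τ| + Real.log (1-p/τ) := by
    rw [Real.log_abs, Real.log_abs, ← Real.log_mul hτ (ne_of_gt h2)]
    congr 1; field_simp
  rw [e1, e2]; ring

lemma term_F (p τ : ℝ) (hp : 0 < p) (h : p < |τ|) :
    τ^5 * ((τ+p)^3 * Real.log (1+p/τ) + (τ-p)^3 * Real.log (1-p/τ))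
      = p^8 * (Fg (p/τ) / (p/τ)^8) + (5*p^2*τ^6 + p^4*τ^4/2 + p^6*τ^2/30) := by
  have hτ : τ ≠ 0 := tau_ne p τ hp h
  have hu : p/τ ≠ 0 := div_ne_zero (ne_of_gt hp) hτ
  unfold Fg
  set a := Real.log (1+p/τ) with ha
  set b := Real.log (1-p/τ) with hb
  field_simp
  ring

lemma tendsto_aux (p : ℝ) (hp : 0 < p) :
    Tendsto (fun τ : ℝ => Fg (p/τ) / (p/τ)^8) (cocompact ℝ) (nhds (1/140)) := by
  apply key.comp
  have h := tendsto_inv₀_cobounded' (α := ℝ)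
  rw [Metric.cobounded_eq_cocompact] at h
  rw [tendsto_nhdsWithin_iff] at h ⊢
  constructor
  · have := h.1.const_mul p
    rw [mul_zero] at this
    exact this.congr (fun x => (div_eq_mul_inv p x).symm)
  · filter_upwards [h.2] with τ hτ
    exact div_ne_zero (ne_of_gt hp) (by simpa using hτ)

/-- Asymptotics of the Franklin `γ_{χ,χᴴ}` closed form: with
`q₀ = −35/16, q₁ = 7/4, q₂ = −7/8, q₃ = 1/4, q₄ = −1/32` and
`γ(τ) = (1/3π)[q₀τ³ln|τ| + Σ_{p=1}^4 q_p((τ+p)³ln|τ+p| + (τ−p)³ln|τ−p|)]`,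
one has `τ⁵ γ(τ) → −3/(2π)` as `|τ| → ∞`. -/
theorem franklin_chi_crosscorr_asymptotics
    (q : ℕ → ℝ) (hq0 : q 0 = -35 / 16) (hq1 : q 1 = 7 / 4) (hq2 : q 2 = -7 / 8)
    (hq3 : q 3 = 1 / 4) (hq4 : q 4 = -1 / 32)
    (γ : ℝ → ℝ)
    (hγ : ∀ τ : ℝ, γ τ = (1 / (3 * π)) * (q 0 * τ ^ 3 * Real.log |τ| +
      ∑ p ∈ Finset.Icc 1 4, q p * ((τ + (p : ℝ)) ^ 3 * Real.log |τ + (p : ℝ)| +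
        (τ - (p : ℝ)) ^ 3 * Real.log |τ - (p : ℝ)|))) :
    Tendsto (fun τ : ℝ => γ τ * τ ^ 5) (cocompact ℝ) (nhds (-3 / (2 * π))) := by
  have h1 := tendsto_aux 1 one_pos
  have h2 := tendsto_aux 2 two_pos
  have h3 := tendsto_aux 3 (by norm_num)
  have h4 := tendsto_aux 4 (by norm_num)
  have hmodel : Tendsto (fun τ : ℝ => (1/(3*π)) *
      ((7/4) * 1^8 * (Fg (1/τ)/(1/τ)^8) + (-7/8) * 2^8 * (Fg (2/τ)/(2/τ)^8)
        + (1/4) * 3^8 * (Fg (3/τ)/(3/τ)^8) + (-1/32) * 4^8 * (Fg (4/τ)/(4/τ)^8)))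
      (cocompact ℝ) (nhds (-3 / (2*π))) := by
    have hc := ((((h1.const_mul ((7/4) * 1^8 : ℝ)).add (h2.const_mul ((-7/8) * 2^8 : ℝ))).add
        (h3.const_mul ((1/4) * 3^8 : ℝ))).add (h4.const_mul ((-1/32) * 4^8 : ℝ))).const_mul
        ((1/(3*π)) : ℝ)
    have hval : (1/(3*π)) * ((7/4) * 1^8 * (1/140) + (-7/8) * 2^8 * (1/140)
        + (1/4) * 3^8 * (1/140) + (-1/32) * 4^8 * (1/140)) = -3 / (2*π) := by
      have hπ : (π:ℝ) ≠ 0 := Real.pi_ne_zero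
      field_simp
      ring
    rw [hval] at hc
    exact hc
  apply hmodel.congr'
  have hK : ∀ᶠ τ : ℝ in cocompact ℝ, 4 < |τ| := by
    filter_upwards [(isCompact_closedBall (0:ℝ) 4).compl_mem_cocompact] with τ hτ
    simpa [Metric.mem_closedBall, Real.dist_eq, not_le] using hτ
  filter_upwards [hK] with τ hτ
  have s1 := split 1 τ one_pos (by linarith)
  have s2 := split 2 τ two_pos (by linarith)
  have s3 := split 3 τ (by norm_num) (by linarith)
  have s4 := split 4 τ (by norm_num) (by linarith)
  have e1 := term_F 1 τ one_pos (by linarith)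
  have e2 := term_F 2 τ two_pos (by linarith)
  have e3 := term_F 3 τ (by norm_num) (by linarith)
  have e4 := term_F 4 τ (by norm_num) (by linarith)
  have hsum : γ τ = (1/(3*π)) * ((-35/16) * τ^3 * Real.log |τ|
      + ((7/4) * ((τ+1)^3 * Real.log |τ+1| + (τ-1)^3 * Real.log |τ-1|)
        + (-7/8) * ((τ+2)^3 * Real.log |τ+2| + (τ-2)^3 * Real.log |τ-2|)
        + (1/4) * ((τ+3)^3 * Real.log |τ+3| + (τ-3)^3 * Real.log |τ-3|)
        + (-1/32) * ((τ+4)^3 * Real.log |τ+4| + (τ-4)^3 * Real.log |τ-4|))) := by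
    rw [hγ τ]
    rw [show Finset.Icc 1 4 = ({1,2,3,4} : Finset ℕ) from rfl]
    rw [Finset.sum_insert (by decide), Finset.sum_insert (by decide),
      Finset.sum_insert (by decide), Finset.sum_singleton]
    push_cast
    rw [hq0, hq1, hq2, hq3, hq4]
    ring
  rw [hsum]
  linear_combination (-(1/(3*π)) * τ^5) * ((7/4)*s1 + (-7/8)*s2 + (1/4)*s3 + (-1/32)*s4)
    - (1/(3*π)) * ((7/4)*e1 + (-7/8)*e2 + (1/4)*e3 + (-1/32)*e4)
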